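/- arXiv:2005.05867 — 3 statements merged into one kernel-verified Lean document; each statement's English description precedes it below -/
import Mathlib

section
/- Let B(t,x) = (1/2)·log( sqrt((1 - e^{2t})(1 - x)(1 + e^{2t} - x(1 - e^{2t}))) - x(1 - e^{2t}) + 1 ) - t. Then B(0,x) = 0 for every x ∈ [-1,1], and for every fixed t < 0 the function x ↦ B(t,x) is strictly decreasing on [-1,1]; in particular its maximum over [-1,1] is B(t,-1) = log(1 + sqrt(1 - e^{2t})) - t. -/
noncomputable def Bfun (t x : ℝ) : ℝ :=
  (1 / 2) * Real.log
      (Real.sqrt ((1 - Real.exp (2 * t)) * (1 - x) *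
          (1 + Real.exp (2 * t) - x * (1 - Real.exp (2 * t)))) -
        x * (1 - Real.exp (2 * t)) + 1) - t

theorem stmt3 :
    (∀ x ∈ Set.Icc (-1 : ℝ) 1, Bfun 0 x = 0) ∧
    (∀ t : ℝ, t < 0 →
      StrictAntiOn (fun x => Bfun t x) (Set.Icc (-1 : ℝ) 1) ∧
      (∀ x ∈ Set.Icc (-1 : ℝ) 1, Bfun t x ≤ Bfun t (-1)) ∧
      Bfun t (-1) = Real.log (1 + Real.sqrt (1 - Real.exp (2 * t))) - t) := by
  constructor
  · intro x hx
    simp [Bfun]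
  · intro t ht
    have he : Real.exp (2 * t) < 1 := by
      have h2t : 2 * t < 0 := by linarith
      simpa using Real.exp_lt_one_iff.mpr h2t
    have hep : 0 < Real.exp (2 * t) := Real.exp_pos _
    set e := Real.exp (2 * t) with hedef
    have ha : 0 < 1 - e := by linarith
    have hanti : StrictAntiOn (fun x => Bfun t x) (Set.Icc (-1 : ℝ) 1) := by
      intro x hx y hy hxy
      obtain ⟨hx1, hx2⟩ := hx
      obtain ⟨hy1, hy2⟩ := hy
      simp only [Bfun]
      have hs : Real.sqrt ((1 - e) * (1 - y) * (1 + e - y * (1 - e))) ≤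
          Real.sqrt ((1 - e) * (1 - x) * (1 + e - x * (1 - e))) := by
        apply Real.sqrt_le_sqrt
        have hc0 : 0 ≤ 1 + e - y * (1 - e) := by nlinarith
        have hcle : 1 + e - y * (1 - e) ≤ 1 + e - x * (1 - e) := by nlinarith
        have hble : (1 - e) * (1 - y) ≤ (1 - e) * (1 - x) := by nlinarith
        have hb0 : 0 ≤ (1 - e) * (1 - x) := by nlinarith
        exact mul_le_mul hble hcle hc0 hb0
      have hya : x * (1 - e) < y * (1 - e) := by nlinarith
      have hypos : 0 < Real.sqrt ((1 - e) * (1 - y) * (1 + e - y * (1 - e))) -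
          y * (1 - e) + 1 := by
        have hsy := Real.sqrt_nonneg ((1 - e) * (1 - y) * (1 + e - y * (1 - e)))
        nlinarith
      have hlt : Real.sqrt ((1 - e) * (1 - y) * (1 + e - y * (1 - e))) -
          y * (1 - e) + 1 < Real.sqrt ((1 - e) * (1 - x) * (1 + e - x * (1 - e))) -
          x * (1 - e) + 1 := by linarith
      have := Real.log_lt_log hypos hlt
      linarith
    refine ⟨hanti, ?_, ?_⟩
    · intro x hx
      rcases eq_or_lt_of_le hx.1 with h | h
      · rw [← h]
      · exact (hanti ⟨le_refl _, by norm_num⟩ hx h).le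
    · have hs : Real.sqrt ((1 - e) * (1 - (-1)) * (1 + e - (-1) * (1 - e))) =
          2 * Real.sqrt (1 - e) := by
        have h4 : (1 - e) * (1 - (-1)) * (1 + e - (-1) * (1 - e)) = 4 * (1 - e) := by
          ring
        rw [h4, show (4 : ℝ) * (1 - e) = 2 ^ 2 * (1 - e) by ring,
          Real.sqrt_mul (by positivity), Real.sqrt_sq (by norm_num)]
      have hsq : Real.sqrt ((1 - e) * (1 - (-1)) * (1 + e - (-1) * (1 - e))) -
          (-1) * (1 - e) + 1 = (1 + Real.sqrt (1 - e)) ^ 2 := by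
        rw [hs]
        have := Real.sq_sqrt ha.le
        nlinarith [Real.sqrt_nonneg (1 - e)]
      simp only [Bfun, ← hedef, hsq]
      rw [Real.log_pow]
      push_cast
      ring
end

section
/- Let α: ℝ → ℝ be a C² function such that h := α'' - (α')² + 1 ≥ 0 everywhere on ℝ. Then |α'(t)| ≤ 1 for all t ∈ ℝ. -/
open Set

lemma stmt4_key (α : ℝ → ℝ) (hα : ContDiff ℝ 2 α)
    (hconv : ∀ t : ℝ, 0 ≤ deriv (deriv α) t - (deriv α t) ^ 2 + 1) :
    ∀ t : ℝ, deriv α t ≤ 1 := by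
  set β := deriv α with hβdef
  have h2 : ContDiff ℝ (1 + 1) α := by norm_num; exact hα
  obtain ⟨hdα, -, hβ1⟩ := contDiff_succ_iff_deriv.mp h2
  have hβdiff : Differentiable ℝ β := hβ1.differentiable one_ne_zero
  have hβcont : Continuous β := hβdiff.continuous
  have hderiv : ∀ t, β t ^ 2 - 1 ≤ deriv β t := fun t => by linarith [hconv t]
  by_contra hcon
  push_neg at hcon
  obtain ⟨t₀, ht₀⟩ := hcon
  set c := β t₀ with hc
  have hc1 : 1 < c := ht₀
  -- Step 1: β t > 1 for all t ≥ t₀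
  have step1 : ∀ t, t₀ ≤ t → 1 < β t := by
    by_contra hbad
    push_neg at hbad
    obtain ⟨s, hs, hsle⟩ := hbad
    set E : Set ℝ := {t | t₀ ≤ t ∧ β t ≤ 1} with hE
    have hEclosed : IsClosed E := by
      have : E = Ici t₀ ∩ β ⁻¹' (Iic 1) := by ext x; simp [hE, and_comm]
      rw [this]
      exact isClosed_Ici.inter (isClosed_Iic.preimage hβcont)
    have hEne : E.Nonempty := ⟨s, hs, hsle⟩
    have hEbdd : BddBelow E := ⟨t₀, fun x hx => hx.1⟩
    set t₁ := sInf E with ht₁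
    have ht₁E : t₁ ∈ E := hEclosed.csInf_mem hEne hEbdd
    have ht₁gt : t₀ < t₁ := by
      rcases lt_or_eq_of_le ht₁E.1 with h | h
      · exact h
      · exfalso; have := ht₁E.2; rw [← h] at this; linarith
    have hgt : ∀ x ∈ Ico t₀ t₁, 1 < β x := by
      intro x hx
      by_contra hle
      push_neg at hle
      have : t₁ ≤ x := csInf_le hEbdd ⟨hx.1, hle⟩
      exact absurd hx.2 (not_lt.mpr this)
    have hmono : MonotoneOn β (Icc t₀ t₁) := by
      apply monotoneOn_of_deriv_nonneg (convex_Icc _ _) hβcont.continuousOn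
        (hβdiff.differentiableOn)
      intro x hx
      rw [interior_Icc] at hx
      have h1 : 1 < β x := hgt x ⟨le_of_lt hx.1, hx.2⟩
      nlinarith [hderiv x]
    have : β t₀ ≤ β t₁ := hmono ⟨le_rfl, le_of_lt ht₁gt⟩ ⟨le_of_lt ht₁gt, le_rfl⟩ (le_of_lt ht₁gt)
    have := ht₁E.2
    linarith
  -- Step 2: β t ≥ c for all t ≥ t₀
  have step2 : ∀ t, t₀ ≤ t → c ≤ β t := by
    intro t ht
    have hmono : MonotoneOn β (Ici t₀) := by
      apply monotoneOn_of_deriv_nonneg (convex_Ici _) hβcont.continuousOn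
        hβdiff.differentiableOn
      intro x hx
      rw [interior_Ici] at hx
      have := step1 x (le_of_lt hx)
      nlinarith [hderiv x]
    exact hmono self_mem_Ici ht ht
  -- Step 3: g t = 1/β t + k t is antitone on [t₀, ∞)
  set k := 1 - 1/c^2 with hk
  have hc0 : (0:ℝ) < c ^ 2 := by positivity
  have hkpos : 0 < k := by
    rw [hk]
    have : 1/c^2 < 1 := by
      rw [div_lt_one hc0]; nlinarith
    linarith
  set g : ℝ → ℝ := fun t => (β t)⁻¹ + k * t with hg
  have hganti : AntitoneOn g (Ici t₀) := by
    apply antitoneOn_of_deriv_nonpos (convex_Ici _)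
    · apply ContinuousOn.add _ (by fun_prop)
      apply ContinuousOn.inv₀ hβcont.continuousOn
      intro x hx
      have := step1 x hx
      linarith
    · rw [interior_Ici]
      intro x hx
      have hne : β x ≠ 0 := by have := step1 x (le_of_lt hx); linarith
      exact (((hβdiff x).inv hne).add (differentiableAt_id.const_mul k)).differentiableWithinAt
    · rw [interior_Ici]
      intro x hx
      have hx' : t₀ ≤ x := le_of_lt hx
      have h1 : 1 < β x := step1 x hx'
      have hne : β x ≠ 0 := by linarith
      have h0 : (0:ℝ) < β x ^ 2 := by positivity
      have H : HasDerivAt g (-deriv β x / β x ^ 2 + k * 1) x :=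
        (((hβdiff x).hasDerivAt).inv hne).add ((hasDerivAt_id x).const_mul k)
      rw [H.deriv]
      have hβ2 : c ^ 2 ≤ β x ^ 2 := by nlinarith [step2 x hx']
      have key : -deriv β x + k * β x ^ 2 ≤ 0 := by
        have e1 : 1/c^2 * c^2 = 1 := by field_simp
        have e2 : 1/c^2 * c^2 ≤ 1/c^2 * β x ^2 :=
          mul_le_mul_of_nonneg_left hβ2 (by positivity)
        have hd := hderiv x
        rw [hk]
        nlinarith
      have : (-deriv β x + k * β x ^ 2) / β x ^ 2 ≤ 0 :=
        div_nonpos_of_nonpos_of_nonneg key h0.le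
      rw [add_div] at this
      have e3 : k * β x ^ 2 / β x ^ 2 = k := by field_simp
      rw [e3] at this
      linarith
  -- Step 4: contradiction
  set T := max t₀ ((g t₀ + 1)/k) with hT
  have hTge : t₀ ≤ T := le_max_left _ _
  have hgT : g T ≤ g t₀ := hganti self_mem_Ici hTge hTge
  have hβT : 1 < β T := step1 T hTge
  have hinv : 0 < (β T)⁻¹ := by positivity
  have hkT : g t₀ + 1 ≤ k * T := by
    have : (g t₀ + 1)/k ≤ T := le_max_right _ _
    calc g t₀ + 1 = k * ((g t₀ + 1)/k) := by field_simp
    _ ≤ k * T := mul_le_mul_of_nonneg_left this hkpos.le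
  have : g T = (β T)⁻¹ + k * T := rfl
  rw [this] at hgT
  clear_value T k g c
  linarith

theorem stmt4 (α : ℝ → ℝ) (hα : ContDiff ℝ 2 α)
    (hconv : ∀ t : ℝ, 0 ≤ deriv (deriv α) t - (deriv α t) ^ 2 + 1) :
    ∀ t : ℝ, |deriv α t| ≤ 1 := by
  intro t
  rw [abs_le]
  constructor
  · -- lower bound via reflection
    set γ : ℝ → ℝ := fun s => α (-s) with hγ
    have hγC : ContDiff ℝ 2 γ := hα.comp (contDiff_id.neg)
    have hd1 : ∀ s, deriv γ s = -deriv α (-s) := fun s => deriv_comp_neg α s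
    have hd2 : ∀ s, deriv (deriv γ) s = deriv (deriv α) (-s) := by
      intro s
      have : deriv γ = fun s => -deriv α (-s) := funext hd1
      rw [this]
      rw [deriv.fun_neg, deriv_comp_neg (deriv α) s]
      ring
    have hconvγ : ∀ s : ℝ, 0 ≤ deriv (deriv γ) s - (deriv γ s) ^ 2 + 1 := by
      intro s
      rw [hd1, hd2]
      have := hconv (-s)
      nlinarith
    have := stmt4_key γ hγC hconvγ (-t)
    rw [hd1] at this
    simp at this
    linarith
  · exact stmt4_key α hα hconv t
end

section
/- Fix μ > 1 and set γ = (μ² - 1)/μ. For any constant u ∈ [-1,1] with μ_u := uγ/2 + sqrt(1 + u²γ²/4), the function I_u(x,y) = (μ_u² + 1)y / ( μ_u(y² - x² + 1) - (μ_u² - 1)xy ) is a first integral of the planar system ẋ = y² + x² - 1, ẏ = 2xy + uγy², i.e., its derivative along any solution of the system vanishes identically (wherever the denominator is nonzero). -/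
theorem stmt9 (μ γ : ℝ) (hμ : 1 < μ) (hγ : γ = (μ ^ 2 - 1) / μ)
    (u : ℝ) (hu : u ∈ Set.Icc (-1 : ℝ) 1)
    (μu : ℝ) (hμu : μu = u * γ / 2 + Real.sqrt (1 + u ^ 2 * γ ^ 2 / 4))
    (x y : ℝ → ℝ)
    (hx : ∀ t : ℝ, HasDerivAt x ((y t) ^ 2 + (x t) ^ 2 - 1) t)
    (hy : ∀ t : ℝ, HasDerivAt y (2 * x t * y t + u * γ * (y t) ^ 2) t)
    (t : ℝ)
    (hden : μu * ((y t) ^ 2 - (x t) ^ 2 + 1) - (μu ^ 2 - 1) * x t * y t ≠ 0) :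
    HasDerivAt
      (fun s => (μu ^ 2 + 1) * y s /
        (μu * ((y s) ^ 2 - (x s) ^ 2 + 1) - (μu ^ 2 - 1) * x s * y s))
      0 t := by
  have hnn : (0:ℝ) ≤ 1 + u ^ 2 * γ ^ 2 / 4 := by positivity
  have hs := Real.sq_sqrt hnn
  have hsn := Real.sqrt_nonneg (1 + u ^ 2 * γ ^ 2 / 4)
  have hpos : 0 < μu := by
    rw [hμu]
    nlinarith [sq_nonneg (u * γ / 2 + Real.sqrt (1 + u ^ 2 * γ ^ 2 / 4)),
      sq_nonneg (u * γ / 2 - Real.sqrt (1 + u ^ 2 * γ ^ 2 / 4))]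
  have hkey : μu ^ 2 - 1 = u * γ * μu := by
    rw [hμu]; nlinarith [hs]
  have hug : u * γ = (μu ^ 2 - 1) / μu := by
    field_simp
    linarith [hkey]
  set a := x t
  set b := y t
  have hx' := hx t
  have hy' := hy t
  have hN : HasDerivAt (fun s => (μu ^ 2 + 1) * y s)
      ((μu ^ 2 + 1) * (2 * a * b + u * γ * b ^ 2)) t := hy'.const_mul _
  have hD : HasDerivAt
      (fun s => μu * ((y s) ^ 2 - (x s) ^ 2 + 1) - (μu ^ 2 - 1) * x s * y s)
      (μu * (2 * b * (2 * a * b + u * γ * b ^ 2) - 2 * a * (b ^ 2 + a ^ 2 - 1))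
        - (μu ^ 2 - 1) * ((b ^ 2 + a ^ 2 - 1) * b + a * (2 * a * b + u * γ * b ^ 2))) t := by
    have h1 : HasDerivAt (fun s => (y s) ^ 2 - (x s) ^ 2 + 1)
        (2 * b * (2 * a * b + u * γ * b ^ 2) - 2 * a * (b ^ 2 + a ^ 2 - 1)) t := by
      have := ((hy'.pow 2).sub (hx'.pow 2)).add_const 1
      refine this.congr_deriv ?_
      ring
    have h2 : HasDerivAt (fun s => (μu ^ 2 - 1) * x s * y s)
        ((μu ^ 2 - 1) * ((b ^ 2 + a ^ 2 - 1) * b + a * (2 * a * b + u * γ * b ^ 2))) t := by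
      have := ((hx'.const_mul (μu ^ 2 - 1)).mul hy')
      refine this.congr_deriv ?_
      ring
    exact (h1.const_mul μu).sub h2
  have hQ := hN.div hD hden
  refine hQ.congr_deriv ?_
  rw [hug]
  have hμune : μu ≠ 0 := ne_of_gt hpos
  field_simp
  ring
end
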